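/- Fix θ ∈ (0, π/2], β ∈ (0, π/2), and b ∈ ℝ. Then the derivative with respect to β of the function β' ↦ ϑ(λ, β', b), evaluated at β, tends to cos β / sin β as λ → +∞. -/

import Mathlib

/-- The function `ϑ(λ, β, b) = arsinh (sinh (b + arsinh (sinh λ / sin θ)) * sin β)`. -/
noncomputable def vartheta (θ lam β b : ℝ) : ℝ :=
  Real.arsinh (Real.sinh (b + Real.arsinh (Real.sinh lam / Real.sin θ)) * Real.sin β)

lemma hasDerivAt_vartheta (θ lam β b : ℝ) :
    HasDerivAt (fun β' : ℝ => vartheta θ lam β' b)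
      ((Real.sqrt (1 + (Real.sinh (b + Real.arsinh (Real.sinh lam / Real.sin θ)) * Real.sin β) ^ 2))⁻¹
        * (Real.sinh (b + Real.arsinh (Real.sinh lam / Real.sin θ)) * Real.cos β)) β := by
  set A := Real.sinh (b + Real.arsinh (Real.sinh lam / Real.sin θ))
  have h1 : HasDerivAt (fun β' : ℝ => A * Real.sin β') (A * Real.cos β) β :=
    (Real.hasDerivAt_sin β).const_mul A
  exact (Real.hasDerivAt_arsinh _).comp β h1

lemma aux_tendsto (s c : ℝ) (hs : 0 < s) :
    Filter.Tendsto (fun A : ℝ => (Real.sqrt (1 + (A * s) ^ 2))⁻¹ * (A * c))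
      Filter.atTop (nhds (c / s)) := by
  have key : ∀ᶠ A : ℝ in Filter.atTop,
      (Real.sqrt (1 + (A * s) ^ 2))⁻¹ * (A * c)
        = c * (Real.sqrt ((A ^ 2)⁻¹ + s ^ 2))⁻¹ := by
    filter_upwards [Filter.eventually_gt_atTop (0 : ℝ)] with A hA
    have hA' : Real.sqrt (1 + (A * s) ^ 2) = A * Real.sqrt ((A ^ 2)⁻¹ + s ^ 2) := by
      rw [← Real.sqrt_sq hA.le, ← Real.sqrt_mul (sq_nonneg A)]
      congr 1
      field_simp
      ring
      exact Real.sq_sqrt (sq_nonneg A)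
    rw [hA', mul_inv]
    field_simp
  have h0 : Filter.Tendsto (fun A : ℝ => (A ^ 2)⁻¹ + s ^ 2) Filter.atTop (nhds (0 + s ^ 2)) :=
    ((Filter.tendsto_pow_atTop two_ne_zero).inv_tendsto_atTop).add tendsto_const_nhds
  have h1 : Filter.Tendsto (fun A : ℝ => Real.sqrt ((A ^ 2)⁻¹ + s ^ 2)) Filter.atTop (nhds s) := by
    have := (Real.continuous_sqrt.tendsto _).comp h0
    simpa [Real.sqrt_sq hs.le, Function.comp_def] using this
  have h2 : Filter.Tendsto (fun A : ℝ => c * (Real.sqrt ((A ^ 2)⁻¹ + s ^ 2))⁻¹)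
      Filter.atTop (nhds (c * s⁻¹)) :=
    Filter.Tendsto.const_mul c (h1.inv₀ hs.ne')
  rw [show c / s = c * s⁻¹ from div_eq_mul_inv c s]
  exact h2.congr' (key.mono fun A h => h.symm)

/-- Fix `θ ∈ (0, π/2]`, `β ∈ (0, π/2)` and `b ∈ ℝ`. The derivative with respect to `β`
of `β' ↦ ϑ(λ, β', b)`, evaluated at `β`, tends to `cos β / sin β` as `λ → +∞`. -/
theorem deriv_vartheta_tendsto (θ β b : ℝ) (hθ : θ ∈ Set.Ioc 0 (Real.pi / 2))
    (hβ : β ∈ Set.Ioo 0 (Real.pi / 2)) :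
    Filter.Tendsto (fun lam : ℝ => deriv (fun β' : ℝ => vartheta θ lam β' b) β)
      Filter.atTop (nhds (Real.cos β / Real.sin β)) := by
  have hsβ : 0 < Real.sin β := Real.sin_pos_of_pos_of_lt_pi hβ.1
    (hβ.2.trans_le (by linarith [Real.pi_pos]))
  have hsθ : 0 < Real.sin θ := Real.sin_pos_of_pos_of_lt_pi hθ.1
    (hθ.2.trans_lt (by linarith [Real.pi_pos]))
  -- A(lam) → atTop
  have hA : Filter.Tendsto
      (fun lam : ℝ => Real.sinh (b + Real.arsinh (Real.sinh lam / Real.sin θ)))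
      Filter.atTop Filter.atTop := by
    have h1 : Filter.Tendsto (fun lam : ℝ => Real.sinh lam / Real.sin θ)
        Filter.atTop Filter.atTop :=
      Real.sinhOrderIso.tendsto_atTop.atTop_div_const hsθ
    have h2 : Filter.Tendsto (fun lam : ℝ => Real.arsinh (Real.sinh lam / Real.sin θ))
        Filter.atTop Filter.atTop := Real.sinhOrderIso.symm.tendsto_atTop.comp h1
    exact Real.sinhOrderIso.tendsto_atTop.comp (Filter.tendsto_atTop_add_const_left _ b h2)
  have heq : (fun lam : ℝ => deriv (fun β' : ℝ => vartheta θ lam β' b) β)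
      = fun lam : ℝ =>
        (Real.sqrt (1 + ((Real.sinh (b + Real.arsinh (Real.sinh lam / Real.sin θ))) * Real.sin β) ^ 2))⁻¹
          * ((Real.sinh (b + Real.arsinh (Real.sinh lam / Real.sin θ))) * Real.cos β) := by
    funext lam
    exact (hasDerivAt_vartheta θ lam β b).deriv
  rw [heq]
  exact (aux_tendsto (Real.sin β) (Real.cos β) hsβ).comp hA
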